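/- arXiv:2210.11040 — 2 statements merged into one kernel-verified Lean document; each statement's English description precedes it below -/
import Mathlib

section
/- Let q ≥ 1 be an integer, let n₁ be a positive divisor of q, and let n₂, h, m ∈ ℤ. For a residue x coprime to a modulus c, let x̄ denote its multiplicative inverse modulo c. Then Σ_{a mod q, gcd(a,q)=1} e(ā(m−h)/q) · S(ā, n₂; q/n₁) = Σ_{d | q} d · μ(q/d) · Σ_{α mod q/n₁, gcd(α, q/n₁)=1, n₁α ≡ h−m (mod d)} e(ᾱ n₂ n₁ / q), where on the left ā is the inverse of a modulo q, and in the right-hand inner sum ᾱ is the inverse of α modulo q/n₁ (so that e(ᾱ n₂ n₁/q) = e(ᾱ n₂ / (q/n₁))). -/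
open scoped Classical

/-- `e t = exp(2 π i t)`. -/
noncomputable def e (t : ℝ) : ℂ := Complex.exp (2 * Real.pi * Complex.I * t)

/-- The multiplicative inverse of `a` modulo `c`, as a natural number in `{0,…,c-1}`
(meaningful when `gcd(a,c) = 1`). -/
def minv (c a : ℕ) : ℕ := ((a : ZMod c)⁻¹).val

/-- The Kloosterman sum `S(x, y; c) = ∑_{α mod c, (α,c)=1} e((xα + yᾱ)/c)`. -/
noncomputable def kloos (x y : ℤ) (c : ℕ) : ℂ :=
  ∑ α ∈ (Finset.range c).filter (fun α => Nat.gcd α c = 1),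
    e (((x * α + y * (minv c α) : ℤ) : ℝ) / c)

lemma e_add (s t : ℝ) : e (s + t) = e s * e t := by
  simp [e, mul_add, Complex.exp_add]

lemma two_pi_I_ne : (2 * (Real.pi:ℂ) * Complex.I) ≠ 0 := by
  simp [Complex.I_ne_zero, Real.pi_ne_zero]

lemma e_eq_one_iff (t : ℝ) : e t = 1 ↔ ∃ n : ℤ, t = n := by
  rw [e, Complex.exp_eq_one_iff]
  constructor
  · rintro ⟨n, hn⟩
    refine ⟨n, ?_⟩
    have : (t:ℂ) = (n:ℂ) := by
      have h2 : (2 * (Real.pi:ℂ) * Complex.I) * t = (2 * (Real.pi:ℂ) * Complex.I) * n := by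
        rw [hn]; ring
      exact mul_left_cancel₀ two_pi_I_ne h2
    exact_mod_cast this
  · rintro ⟨n, rfl⟩
    exact ⟨n, by push_cast; ring⟩

lemma e_int (k : ℤ) : e k = 1 := (e_eq_one_iff _).mpr ⟨k, rfl⟩

lemma e_frac_eq_one_iff (k : ℤ) (q : ℕ) (hq : 0 < q) : e ((k:ℝ)/q) = 1 ↔ (q:ℤ) ∣ k := by
  rw [e_eq_one_iff]
  have hq0 : (q:ℝ) ≠ 0 := by exact_mod_cast hq.ne'
  constructor
  · rintro ⟨n, hn⟩
    refine ⟨n, ?_⟩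
    have : (k:ℝ) = (q:ℝ) * n := by field_simp at hn; linarith
    exact_mod_cast this
  · rintro ⟨n, rfl⟩
    exact ⟨n, by push_cast; field_simp⟩

lemma e_nat_mul (n : ℕ) (t : ℝ) : e (n * t) = (e t) ^ n := by
  simp [e, ← Complex.exp_nat_mul]; ring_nf

lemma full_sum (q : ℕ) (hq : 0 < q) (k : ℤ) :
    ∑ a ∈ Finset.range q, e ((k:ℝ) * a / q) = if (q:ℤ) ∣ k then (q:ℂ) else 0 := by
  have hq0 : (q:ℝ) ≠ 0 := by exact_mod_cast hq.ne'
  have hterm : ∀ a : ℕ, e ((k:ℝ) * a / q) = (e ((k:ℝ)/q))^a := by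
    intro a
    rw [← e_nat_mul]
    congr 1; ring
  simp only [hterm]
  by_cases hdvd : (q:ℤ) ∣ k
  · have : e ((k:ℝ)/q) = 1 := (e_frac_eq_one_iff k q hq).mpr hdvd
    simp [this, hdvd]
  · have hne : e ((k:ℝ)/q) ≠ 1 := fun hcon => hdvd ((e_frac_eq_one_iff k q hq).mp hcon)
    rw [geom_sum_eq hne]
    have hpow : (e ((k:ℝ)/q))^q = 1 := by
      rw [← e_nat_mul]
      have : (q:ℝ) * ((k:ℝ)/q) = (k:ℤ) := by field_simp
      rw [this, e_int]
    simp [hpow, hdvd]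

open Finset ArithmeticFunction in
lemma moebius_indicator (n : ℕ) (hn : 0 < n) :
    ((∑ d ∈ n.divisors, moebius d : ℤ) : ℂ) = if n = 1 then 1 else 0 := by
  have := congrArg (fun f => f n) moebius_mul_coe_zeta
  simp only [coe_mul_zeta_apply, one_apply] at this
  rw [this]
  split <;> simp

open Finset ArithmeticFunction in
lemma ramanujan (q : ℕ) (hq : 0 < q) (k : ℤ) :
    ∑ a ∈ (range q).filter (fun a => Nat.gcd a q = 1), e ((k:ℝ) * a / q)
      = ∑ d ∈ q.divisors, if (d:ℤ) ∣ k then (d:ℂ) * (moebius (q/d) : ℂ) else 0 := by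
  have hgcd : ∀ a, 0 < Nat.gcd a q := fun a => Nat.gcd_pos_of_pos_right a hq
  rw [Finset.sum_filter]
  have step1 : ∀ a ∈ range q,
      (if Nat.gcd a q = 1 then e ((k:ℝ) * a / q) else 0)
        = ∑ t ∈ q.divisors, (if t ∣ a then (moebius t : ℂ) else 0) * e ((k:ℝ) * a / q) := by
    intro a _
    have hset : q.divisors.filter (· ∣ a) = (Nat.gcd a q).divisors := by
      ext t
      simp only [Finset.mem_filter, Nat.mem_divisors, Nat.dvd_gcd_iff]
      constructor
      · rintro ⟨⟨h1, _⟩, h3⟩; exact ⟨⟨h3, h1⟩, (hgcd a).ne'⟩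
      · rintro ⟨⟨h1, h2⟩, _⟩; exact ⟨⟨h2, hq.ne'⟩, h1⟩
    have hind : (∑ t ∈ q.divisors, if t ∣ a then (moebius t : ℂ) else 0)
        = if Nat.gcd a q = 1 then 1 else 0 := by
      rw [← Finset.sum_filter, hset]
      rw [show (∑ t ∈ (Nat.gcd a q).divisors, (moebius t : ℂ))
            = ((∑ t ∈ (Nat.gcd a q).divisors, moebius t : ℤ) : ℂ) by push_cast; rfl]
      exact moebius_indicator _ (hgcd a)
    rw [← Finset.sum_mul, hind]
    split <;> simp
  rw [Finset.sum_congr rfl step1, Finset.sum_comm]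
  rw [show (∑ d ∈ q.divisors, if (d:ℤ) ∣ k then (d:ℂ) * (moebius (q/d) : ℂ) else 0)
      = ∑ t ∈ q.divisors,
          (fun (d : ℕ) => if (d:ℤ) ∣ k then (d:ℂ) * (moebius (q/d) : ℂ) else 0) (q / t) from
    (Nat.sum_div_divisors q _).symm]
  refine Finset.sum_congr rfl fun t ht => ?_
  obtain ⟨ht_dvd, _⟩ := Nat.mem_divisors.mp ht
  have ht0 : 0 < t := Nat.pos_of_mem_divisors ht
  have hqt : 0 < q / t := Nat.div_pos (Nat.le_of_dvd hq ht_dvd) ht0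
  -- inner sum over a with t ∣ a
  have inner : ∑ a ∈ range q, (if t ∣ a then (moebius t : ℂ) else 0) * e ((k:ℝ) * a / q)
      = (moebius t : ℂ) * ∑ b ∈ range (q / t), e ((k:ℝ) * b / (q / t : ℕ)) := by
    rw [Finset.mul_sum]
    rw [show ∑ a ∈ range q, (if t ∣ a then (moebius t : ℂ) else 0) * e ((k:ℝ) * a / q)
          = ∑ a ∈ (range q).filter (t ∣ ·), (moebius t : ℂ) * e ((k:ℝ) * a / q) by
        rw [Finset.sum_filter]; exact Finset.sum_congr rfl fun a _ => by split <;> simp]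
    refine Finset.sum_nbij' (fun a => a / t) (fun b => t * b) ?_ ?_ ?_ ?_ ?_
    · intro a ha
      simp only [Finset.mem_filter, Finset.mem_range] at ha
      exact Finset.mem_range.mpr (Nat.div_lt_div_of_lt_of_dvd ht_dvd ha.1)
    · intro b hb
      simp only [Finset.mem_range] at hb
      refine Finset.mem_filter.mpr ⟨Finset.mem_range.mpr ?_, Dvd.intro b rfl⟩
      calc t * b < t * (q / t) := (Nat.mul_lt_mul_left ht0).mpr hb
        _ = q := Nat.mul_div_cancel' ht_dvd
    · intro a ha
      simp only [Finset.mem_filter] at ha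
      exact Nat.mul_div_cancel' ha.2
    · intro b _
      exact Nat.mul_div_cancel_left b ht0
    · intro a ha
      simp only [Finset.mem_filter] at ha
      obtain ⟨c, rfl⟩ := ha.2
      congr 1
      have : (q:ℝ) = (t:ℝ) * ((q/t : ℕ):ℝ) := by
        exact_mod_cast (Nat.mul_div_cancel' ht_dvd).symm
      simp only [Nat.mul_div_cancel_left c ht0]
      rw [this]
      have ht0' : (t:ℝ) ≠ 0 := by exact_mod_cast ht0.ne'
      have hqt0' : ((q/t : ℕ):ℝ) ≠ 0 := by exact_mod_cast hqt.ne'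
      push_cast
      field_simp
  rw [inner, full_sum (q/t) hqt k]
  have hqqt : q / (q / t) = t := Nat.div_div_self ht_dvd hq.ne'
  simp only [hqqt]
  split <;> ring


lemma minv_lt (q a : ℕ) (hq : 0 < q) : minv q a < q := by
  haveI : NeZero q := ⟨hq.ne'⟩
  exact ZMod.val_lt _

lemma minv_coprime (q a : ℕ) (hq : 0 < q) (h : Nat.gcd a q = 1) :
    Nat.gcd (minv q a) q = 1 := by
  haveI : NeZero q := ⟨hq.ne'⟩
  have hu : IsUnit (a : ZMod q) := (ZMod.isUnit_iff_coprime a q).mpr h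
  have : (a : ZMod q)⁻¹ = ((hu.unit⁻¹ : (ZMod q)ˣ) : ZMod q) := by
    rw [← ZMod.inv_coe_unit, hu.unit_spec]
  unfold minv
  rw [this]
  exact ZMod.val_coe_unit_coprime _

lemma minv_minv (q a : ℕ) (hq : 0 < q) (ha : a < q) (h : Nat.gcd a q = 1) :
    minv q (minv q a) = a := by
  haveI : NeZero q := ⟨hq.ne'⟩
  have hu : IsUnit (a : ZMod q) := (ZMod.isUnit_iff_coprime a q).mpr h
  have h2 : ((a : ZMod q)⁻¹)⁻¹ = (a : ZMod q) := by
    rw [← hu.unit_spec, ZMod.inv_coe_unit, ZMod.inv_coe_unit, inv_inv, hu.unit_spec]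
  show ((((((a : ZMod q)⁻¹).val : ℕ) : ZMod q))⁻¹).val = a
  rw [show (((((a : ZMod q)⁻¹).val : ℕ)) : ZMod q) = (a : ZMod q)⁻¹ from
    ZMod.natCast_rightInverse _, h2, ZMod.val_cast_of_lt ha]

lemma sum_minv (q : ℕ) (hq : 0 < q) (F : ℕ → ℂ) :
    ∑ a ∈ (Finset.range q).filter (fun a => Nat.gcd a q = 1), F (minv q a)
      = ∑ a ∈ (Finset.range q).filter (fun a => Nat.gcd a q = 1), F a := by
  refine Finset.sum_nbij' (fun a => minv q a) (fun a => minv q a) ?_ ?_ ?_ ?_ ?_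
  · intro a ha
    simp only [Finset.mem_filter, Finset.mem_range] at ha ⊢
    exact ⟨minv_lt q a hq, minv_coprime q a hq ha.2⟩
  · intro a ha
    simp only [Finset.mem_filter, Finset.mem_range] at ha ⊢
    exact ⟨minv_lt q a hq, minv_coprime q a hq ha.2⟩
  · intro a ha
    simp only [Finset.mem_filter, Finset.mem_range] at ha
    exact minv_minv q a hq ha.1 ha.2
  · intro a ha
    simp only [Finset.mem_filter, Finset.mem_range] at ha
    exact minv_minv q a hq ha.1 ha.2
  · intro a _
    rfl

theorem stmt6 (q n₁ : ℕ) (hq : 0 < q) (hn₁ : 0 < n₁) (hdvd : n₁ ∣ q) (n₂ h m : ℤ) :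
    ∑ a ∈ (Finset.range q).filter (fun a => Nat.gcd a q = 1),
        e ((((minv q a : ℤ) * (m - h) : ℤ) : ℝ) / q) * kloos (minv q a) n₂ (q / n₁)
      = ∑ d ∈ q.divisors, (d : ℂ) * (ArithmeticFunction.moebius (q / d) : ℂ) *
          ∑ α ∈ ((Finset.range (q / n₁)).filter
              (fun α => Nat.gcd α (q / n₁) = 1 ∧ ((n₁ : ℤ) * α ≡ h - m [ZMOD (d : ℤ)]))),
            e ((((minv (q / n₁) α : ℤ) * n₂ * n₁ : ℤ) : ℝ) / q) := by
  classical
  set c := q / n₁ with hc_def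
  have hc : 0 < c := Nat.div_pos (Nat.le_of_dvd hq hdvd) hn₁
  have hcq : n₁ * c = q := Nat.mul_div_cancel' hdvd
  have hq0 : (q:ℝ) ≠ 0 := by exact_mod_cast hq.ne'
  have hc0 : (c:ℝ) ≠ 0 := by exact_mod_cast hc.ne'
  have hcqR : (n₁:ℝ) * c = q := by exact_mod_cast hcq
  -- step 1: remove the outer minv by reindexing
  rw [sum_minv q hq (fun b => e ((((b : ℤ) * (m - h) : ℤ) : ℝ) / q) * kloos (b : ℤ) n₂ c)]
  -- step 2: expand kloos and combine exponentials
  have key : ∀ a : ℕ, ∀ α : ℕ,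
      e ((((a : ℤ) * (m - h) : ℤ) : ℝ) / q) * e ((((a:ℤ) * α + n₂ * (minv c α) : ℤ) : ℝ) / c)
        = e ((((minv c α : ℤ) * n₂ * n₁ : ℤ) : ℝ) / q)
            * e ((((m - h + n₁ * α : ℤ)) : ℝ) * a / q) := by
    intro a α
    have hn0 : (n₁:ℝ) ≠ 0 := by exact_mod_cast hn₁.ne'
    rw [← e_add, ← e_add]
    congr 1
    push_cast
    rw [← hcqR]
    field_simp
    ring
  calc ∑ a ∈ (Finset.range q).filter (fun a => Nat.gcd a q = 1),
        e ((((a : ℤ) * (m - h) : ℤ) : ℝ) / q) * kloos (a : ℤ) n₂ c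
      = ∑ α ∈ (Finset.range c).filter (fun α => Nat.gcd α c = 1),
          e ((((minv c α : ℤ) * n₂ * n₁ : ℤ) : ℝ) / q)
            * ∑ a ∈ (Finset.range q).filter (fun a => Nat.gcd a q = 1),
                e ((((m - h + n₁ * α : ℤ)) : ℝ) * a / q) := by
        simp only [kloos, Finset.mul_sum]
        rw [Finset.sum_comm]
        exact Finset.sum_congr rfl fun α _ => Finset.sum_congr rfl fun a _ => key a α
    _ = ∑ α ∈ (Finset.range c).filter (fun α => Nat.gcd α c = 1),
          e ((((minv c α : ℤ) * n₂ * n₁ : ℤ) : ℝ) / q)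
            * ∑ d ∈ q.divisors,
                (if (d:ℤ) ∣ (m - h + n₁ * α) then (d:ℂ) * (ArithmeticFunction.moebius (q/d) : ℂ)
                 else 0) := by
        refine Finset.sum_congr rfl fun α _ => ?_
        rw [ramanujan q hq (m - h + n₁ * α)]
    _ = ∑ d ∈ q.divisors, ∑ α ∈ (Finset.range c).filter (fun α => Nat.gcd α c = 1),
          (if (d:ℤ) ∣ (m - h + n₁ * α) then
              (d:ℂ) * (ArithmeticFunction.moebius (q/d) : ℂ)
                * e ((((minv c α : ℤ) * n₂ * n₁ : ℤ) : ℝ) / q)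
           else 0) := by
        simp only [Finset.mul_sum]
        rw [Finset.sum_comm]
        refine Finset.sum_congr rfl fun d _ => Finset.sum_congr rfl fun α _ => ?_
        split <;> ring
    _ = ∑ d ∈ q.divisors, (d : ℂ) * (ArithmeticFunction.moebius (q / d) : ℂ) *
          ∑ α ∈ ((Finset.range c).filter
              (fun α => Nat.gcd α c = 1 ∧ ((n₁ : ℤ) * α ≡ h - m [ZMOD (d : ℤ)]))),
            e ((((minv c α : ℤ) * n₂ * n₁ : ℤ) : ℝ) / q) := by
        refine Finset.sum_congr rfl fun d _ => ?_
        rw [Finset.mul_sum, ← Finset.sum_filter]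
        rw [Finset.filter_filter]
        refine Finset.sum_congr ?_ fun α _ => by ring
        refine Finset.filter_congr fun α _ => ?_
        have : ((n₁ : ℤ) * α ≡ h - m [ZMOD (d : ℤ)]) ↔ (d:ℤ) ∣ (m - h + n₁ * α) := by
          rw [Int.modEq_iff_dvd,
            show m - h + (n₁:ℤ) * α = -((h - m) - (n₁:ℤ) * α) by ring, dvd_neg]
        rw [and_congr_right_iff]
        intro _
        rw [this]
end

section
/- Let R ≥ 1 be a real number and let a, b be nonzero integers. Then Σ_{1 ≤ q ≤ R} gcd(q, a)·gcd(q, b) ≤ R · τ(|a|) · τ(|b|) · gcd(a, b), where the sum is over integers q. -/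
lemma key14 (N A B : ℕ) (hA : A ≠ 0) (hB : B ≠ 0) :
    ∑ q ∈ Finset.Icc 1 N, Nat.gcd q A * Nat.gcd q B
      ≤ A.divisors.card * B.divisors.card * (N * Nat.gcd A B) := by
  have step1 : ∀ q ∈ Finset.Icc 1 N,
      Nat.gcd q A * Nat.gcd q B ≤
        ∑ d ∈ A.divisors, ∑ e ∈ B.divisors,
          if d ∣ q ∧ e ∣ q then d * e else 0 := by
    intro q hq
    have hq1 : 1 ≤ q := (Finset.mem_Icc.mp hq).1
    have hdmem : Nat.gcd q A ∈ A.divisors :=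
      Nat.mem_divisors.mpr ⟨Nat.gcd_dvd_right q A, hA⟩
    have hemem : Nat.gcd q B ∈ B.divisors :=
      Nat.mem_divisors.mpr ⟨Nat.gcd_dvd_right q B, hB⟩
    calc Nat.gcd q A * Nat.gcd q B
        = ∑ e ∈ {Nat.gcd q B}, if Nat.gcd q A ∣ q ∧ e ∣ q then Nat.gcd q A * e else 0 := by
          simp [Nat.gcd_dvd_left]
      _ ≤ ∑ e ∈ B.divisors, if Nat.gcd q A ∣ q ∧ e ∣ q then Nat.gcd q A * e else 0 := by
          apply Finset.sum_le_sum_of_subset_of_nonneg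
          · simpa using hemem
          · intro i _ _; positivity
      _ ≤ ∑ d ∈ A.divisors, ∑ e ∈ B.divisors, if d ∣ q ∧ e ∣ q then d * e else 0 := by
          apply Finset.single_le_sum (f := fun d => ∑ e ∈ B.divisors,
            if d ∣ q ∧ e ∣ q then d * e else 0) _ hdmem
          intro i _
          positivity
  calc ∑ q ∈ Finset.Icc 1 N, Nat.gcd q A * Nat.gcd q B
      ≤ ∑ q ∈ Finset.Icc 1 N, ∑ d ∈ A.divisors, ∑ e ∈ B.divisors,
          if d ∣ q ∧ e ∣ q then d * e else 0 := Finset.sum_le_sum step1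
    _ = ∑ d ∈ A.divisors, ∑ e ∈ B.divisors, ∑ q ∈ Finset.Icc 1 N,
          if d ∣ q ∧ e ∣ q then d * e else 0 := by
        rw [Finset.sum_comm]
        exact Finset.sum_congr rfl fun d _ => Finset.sum_comm
    _ ≤ ∑ d ∈ A.divisors, ∑ e ∈ B.divisors, N * Nat.gcd A B := by
        apply Finset.sum_le_sum
        intro d hd
        apply Finset.sum_le_sum
        intro e he
        have hdA : d ∣ A := (Nat.mem_divisors.mp hd).1
        have heB : e ∣ B := (Nat.mem_divisors.mp he).1
        have hiff : ∀ q : ℕ, (d ∣ q ∧ e ∣ q) ↔ Nat.lcm d e ∣ q := by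
          intro q; exact (Nat.lcm_dvd_iff).symm
        have hcount : ∑ q ∈ Finset.Icc 1 N, (if d ∣ q ∧ e ∣ q then d * e else 0)
            = ((Finset.Icc 1 N).filter (fun q => Nat.lcm d e ∣ q)).card * (d * e) := by
          rw [← Finset.sum_filter]
          rw [Finset.filter_congr (fun q _ => hiff q)]
          rw [Finset.sum_const, smul_eq_mul]
        rw [hcount]
        have hcard : ((Finset.Icc 1 N).filter (fun q => Nat.lcm d e ∣ q)).card
            = N / Nat.lcm d e := by
          have : Finset.Icc 1 N = Finset.Ioc 0 N := rfl
          rw [this, Nat.Ioc_filter_dvd_card_eq_div]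
        rw [hcard]
        calc N / Nat.lcm d e * (d * e)
            = N / Nat.lcm d e * (Nat.gcd d e * Nat.lcm d e) := by rw [Nat.gcd_mul_lcm]
          _ = Nat.gcd d e * (N / Nat.lcm d e * Nat.lcm d e) := by ring
          _ ≤ Nat.gcd d e * N := Nat.mul_le_mul_left _ (Nat.div_mul_le_self N _)
          _ ≤ Nat.gcd A B * N := by
              apply Nat.mul_le_mul_right
              apply Nat.le_of_dvd (Nat.gcd_pos_of_pos_left B (Nat.pos_of_ne_zero hA))
              exact Nat.dvd_gcd ((Nat.gcd_dvd_left d e).trans hdA)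
                ((Nat.gcd_dvd_right d e).trans heB)
          _ = N * Nat.gcd A B := Nat.mul_comm _ _
    _ = A.divisors.card * B.divisors.card * (N * Nat.gcd A B) := by
        simp [Finset.sum_const, mul_assoc]

theorem stmt14 (R : ℝ) (hR : 1 ≤ R) (a b : ℤ) (ha : a ≠ 0) (hb : b ≠ 0) :
    ((∑ q ∈ Finset.Icc 1 ⌊R⌋₊, Int.gcd (q : ℤ) a * Int.gcd (q : ℤ) b : ℕ) : ℝ)
      ≤ R * (a.natAbs.divisors.card) * (b.natAbs.divisors.card) * Int.gcd a b := by
  have hA : a.natAbs ≠ 0 := Int.natAbs_ne_zero.mpr ha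
  have hB : b.natAbs ≠ 0 := Int.natAbs_ne_zero.mpr hb
  have hgcd : ∀ q : ℕ, Int.gcd (q : ℤ) a = Nat.gcd q a.natAbs := by
    intro q; simp [Int.gcd]
  have hgcd' : ∀ q : ℕ, Int.gcd (q : ℤ) b = Nat.gcd q b.natAbs := by
    intro q; simp [Int.gcd]
  have hkey := key14 ⌊R⌋₊ a.natAbs b.natAbs hA hB
  have hsum : (∑ q ∈ Finset.Icc 1 ⌊R⌋₊, Int.gcd (q : ℤ) a * Int.gcd (q : ℤ) b)
      = ∑ q ∈ Finset.Icc 1 ⌊R⌋₊, Nat.gcd q a.natAbs * Nat.gcd q b.natAbs := by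
    exact Finset.sum_congr rfl fun q _ => by rw [hgcd, hgcd']
  rw [hsum]
  have hfloor : (⌊R⌋₊ : ℝ) ≤ R := Nat.floor_le (by linarith)
  have h1 : ((∑ q ∈ Finset.Icc 1 ⌊R⌋₊, Nat.gcd q a.natAbs * Nat.gcd q b.natAbs : ℕ) : ℝ)
      ≤ ((a.natAbs.divisors.card * b.natAbs.divisors.card * (⌊R⌋₊ * Nat.gcd a.natAbs b.natAbs) : ℕ) : ℝ) :=
    Nat.cast_le.mpr hkey
  refine h1.trans ?_
  have : Int.gcd a b = Nat.gcd a.natAbs b.natAbs := rfl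
  rw [this]
  push_cast
  have hca : (0:ℝ) ≤ (a.natAbs.divisors.card : ℝ) := by positivity
  have hcb : (0:ℝ) ≤ (b.natAbs.divisors.card : ℝ) := by positivity
  have hg : (0:ℝ) ≤ (Nat.gcd a.natAbs b.natAbs : ℝ) := by positivity
  nlinarith [mul_nonneg (mul_nonneg hca hcb) hg]
end
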